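/- Suppose a₁, a₂, c₁, c₂, c₃, c₄ > 0. If (u₁, u₂, v₁, v₂, v₃, v₄) ∈ ℝ⁶ is a constant equilibrium satisfying u₁ ≥ v₁ and u₂ ≤ v₄, then u₁ = M₀ − (a₁c₂/D₃)(M₀+W₁), u₂ = (a₁c₂/D₃)(M₀+W₁), v₁ = (a₂c₂/D₃)(M₀+W₁), v₂ = (a₂(a₁+c₁)/D₃)(M₀+W₁), v₃ = (c₄/(c₃+c₄))N₀ − ((a₂c₄(a₁+c₁+c₂)−a₁a₂c₂)/(D₃(c₃+c₄)))(M₀+W₁), v₄ = (c₃/(c₃+c₄))N₀ − ((a₂c₃(a₁+c₁+c₂)+a₁a₂c₂)/(D₃(c₃+c₄)))(M₀+W₁). In particular, there is at most one constant equilibrium with u₁ ≥ v₁ and u₂ ≤ v₄. -/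

import Mathlib

/-- A constant equilibrium of the conservative reaction-diffusion system. -/
def IsConstantEquilibrium (a1 a2 c1 c2 c3 c4 M0 N0 W1 W2 u1 u2 v1 v2 v3 v4 : ℝ) : Prop :=
  (-a1 * min u1 v1 + a2 * min u2 v4 = 0) ∧
  (a1 * min u1 v1 - a2 * min u2 v4 = 0) ∧
  (-a1 * min u1 v1 - c1 * v1 + c2 * v2 = 0) ∧
  (-c2 * v2 + c1 * v1 + a2 * min u2 v4 = 0) ∧
  (-c3 * v3 + c4 * v4 + a1 * min u1 v1 = 0) ∧
  (-a2 * min u2 v4 - c4 * v4 + c3 * v3 = 0) ∧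
  (u1 + u2 = M0) ∧ (v1 + v2 + v3 + v4 = N0) ∧
  (v1 + v2 - u1 = W1) ∧ (v3 + v4 - u2 = W2)

theorem equilibrium_Q3_unique (a1 a2 c1 c2 c3 c4 M0 N0 W1 W2 : ℝ)
    (ha1 : 0 < a1) (ha2 : 0 < a2) (hc1 : 0 < c1) (hc2 : 0 < c2)
    (hc3 : 0 < c3) (hc4 : 0 < c4)
    (D3 : ℝ)
    (hD3 : D3 = a2 * (a1 + c1 + c2) + a1 * c2)
    (u1 u2 v1 v2 v3 v4 : ℝ)
    (heq : IsConstantEquilibrium a1 a2 c1 c2 c3 c4 M0 N0 W1 W2 u1 u2 v1 v2 v3 v4)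
    (h1 : u1 ≥ v1) (h2 : u2 ≤ v4) :
    u1 = M0 - (a1 * c2 / D3) * (M0 + W1) ∧
    u2 = (a1 * c2 / D3) * (M0 + W1) ∧
    v1 = (a2 * c2 / D3) * (M0 + W1) ∧
    v2 = (a2 * (a1 + c1) / D3) * (M0 + W1) ∧
    v3 = (c4 / (c3 + c4)) * N0 - ((a2 * c4 * (a1 + c1 + c2) - a1 * a2 * c2) / (D3 * (c3 + c4))) * (M0 + W1) ∧
    v4 = (c3 / (c3 + c4)) * N0 - ((a2 * c3 * (a1 + c1 + c2) + a1 * a2 * c2) / (D3 * (c3 + c4))) * (M0 + W1) := by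
  obtain ⟨e1, e2, e3, e4, e5, e6, e7, e8, e9, e10⟩ := heq
  simp only [min_eq_right h1, min_eq_left h2] at e1 e3 e5
  have hD3pos : 0 < D3 := by rw [hD3]; positivity
  have hD3ne : D3 ≠ 0 := ne_of_gt hD3pos
  have hc34 : c3 + c4 ≠ 0 := by positivity
  have hv1 : D3 * v1 = a2 * c2 * (M0 + W1) := by
    linear_combination a2 * c2 * e9 + a2 * c2 * e7 - c2 * e1 - a2 * e3 + v1 * hD3
  have hv2 : c2 * (D3 * v2) = c2 * (a2 * (a1 + c1) * (M0 + W1)) := by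
    linear_combination D3 * e3 + (a1 + c1) * hv1
  have hv2 : D3 * v2 = a2 * (a1 + c1) * (M0 + W1) := mul_left_cancel₀ (ne_of_gt hc2) hv2
  have hu2 : a2 * (D3 * u2) = a2 * (a1 * c2 * (M0 + W1)) := by
    linear_combination D3 * e1 + a1 * hv1
  have hu2 : D3 * u2 = a1 * c2 * (M0 + W1) := mul_left_cancel₀ (ne_of_gt ha2) hu2
  have hu1 : D3 * u1 = D3 * M0 - a1 * c2 * (M0 + W1) := by
    linear_combination D3 * e7 - hu2
  have hv3 : D3 * (c3 + c4) * v3 = c4 * D3 * N0 -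
      (a2 * c4 * (a1 + c1 + c2) - a1 * a2 * c2) * (M0 + W1) := by
    linear_combination c4 * D3 * e8 - D3 * e5 + (a1 - c4) * hv1 - c4 * hv2
  have hv4 : D3 * (c3 + c4) * v4 = c3 * D3 * N0 -
      (a2 * c3 * (a1 + c1 + c2) + a1 * a2 * c2) * (M0 + W1) := by
    linear_combination c3 * D3 * e8 + D3 * e5 - (a1 + c3) * hv1 - c3 * hv2
  refine ⟨?_, ?_, ?_, ?_, ?_, ?_⟩
  · field_simp
    linear_combination hu1
  · field_simp
    linear_combination hu2
  · field_simp
    linear_combination hv1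
  · field_simp
    linear_combination hv2
  · field_simp
    linear_combination hv3
  · field_simp
    linear_combination hv4
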